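/- Let (C*, F) and (D*, G) be filtered cochain complexes of abelian groups, and let φ : C* → D* and ψ : D* → C* be filtration-preserving chain maps (φ(F_q) ⊆ G_q, ψ(G_q) ⊆ F_q) each inducing an isomorphism on cohomology, with H^0(C) ≅ ℤ ≅ H^0(D). Then for every q, the induced filtration submodules correspond: under the isomorphism H^0(C) ≅ H^0(D) induced by φ, the image of H^0(C)_q equals H^0(D)_q, and hence the associated graded groups H^0(C)^{(q)} and H^0(D)^{(q)} are isomorphic for all q. -/

import Mathlib

section

variable (C : ℤ → Type) [∀ i, AddCommGroup (C i)]
variable (d : ∀ i : ℤ, C i →+ C (i + 1))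

/-- The cocycles in degree `i+1`: the kernel of `d_{i+1}`. -/
def cocycles (i : ℤ) : AddSubgroup (C (i + 1)) := (d (i + 1)).ker

/-- The coboundaries in degree `i+1`, viewed as a subgroup of the cocycles. -/
def coboundaries (i : ℤ) : AddSubgroup (cocycles C d i) :=
  (d i).range.addSubgroupOf (cocycles C d i)

/-- The cohomology of `C` in degree `i+1`. -/
abbrev cohomology (i : ℤ) := cocycles C d i ⧸ coboundaries C d i

/-- The induced filtration `H(C)_q = im(H(F_q) → H(C))` on cohomology. -/
def inducedFiltration (F : ℤ → ∀ i, AddSubgroup (C i)) (q i : ℤ) :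
    AddSubgroup (cohomology C d i) :=
  AddSubgroup.map (QuotientAddGroup.mk' (coboundaries C d i))
    ((F q (i + 1)).addSubgroupOf (cocycles C d i))

/-- The associated graded cohomology group `H(C)^{(q)} = H(C)_q / H(C)_{q+2}`. -/
abbrev gradedCohomology (F : ℤ → ∀ i, AddSubgroup (C i)) (q i : ℤ) :=
  inducedFiltration C d F q i ⧸
    (inducedFiltration C d F (q + 2) i).addSubgroupOf (inducedFiltration C d F q i)

end

/-- A chain map restricted to a map of cocycle groups in degree `i+1`. -/
def mapOnCocycles (C D : ℤ → Type) [∀ i, AddCommGroup (C i)] [∀ i, AddCommGroup (D i)]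
    (dC : ∀ i : ℤ, C i →+ C (i + 1)) (dD : ∀ i : ℤ, D i →+ D (i + 1))
    (φ : ∀ i : ℤ, C i →+ D i)
    (hφd : ∀ (i : ℤ) (c : C i), φ (i + 1) (dC i c) = dD i (φ i c)) (i : ℤ) :
    cocycles C dC i →+ cocycles D dD i :=
  AddMonoidHom.codRestrict ((φ (i + 1)).comp (cocycles C dC i).subtype) _
    (fun z => by
      have h2 : dC (i + 1) ((cocycles C dC i).subtype z) = 0 :=
        AddMonoidHom.mem_ker.mp z.2
      show ((φ (i + 1)).comp (cocycles C dC i).subtype) z ∈ (dD (i + 1)).ker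
      rw [AddMonoidHom.mem_ker, AddMonoidHom.comp_apply, ← hφd (i + 1), h2, map_zero])


private lemma int_equiv_map_eq (β : ℤ ≃+ ℤ) (S : AddSubgroup ℤ) :
    AddSubgroup.map β.toAddMonoidHom S = S := by
  have hβ : ∀ n : ℤ, β n = n * β 1 := fun n => by
    have := map_zsmul β n (1 : ℤ); simpa [smul_eq_mul] using this
  have hunit : β 1 = 1 ∨ β 1 = -1 := by
    refine Int.isUnit_iff.mp (IsUnit.of_mul_eq_one (a := β 1) (β.symm 1) ?_)
    have h := hβ (β.symm 1)
    rw [β.apply_symm_apply] at h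
    linarith
  ext x
  simp only [AddSubgroup.mem_map, AddMonoidHom.coe_coe, AddEquiv.toAddMonoidHom_eq_coe]
  rcases hunit with h | h
  · constructor
    · rintro ⟨s, hs, rfl⟩; rwa [hβ, h, mul_one]
    · exact fun hx => ⟨x, hx, by rw [hβ, h, mul_one]⟩
  · constructor
    · rintro ⟨s, hs, rfl⟩
      have hβs : β s = -s := by rw [hβ, h]; ring
      rw [hβs]; exact S.neg_mem hs
    · intro hx
      exact ⟨-x, S.neg_mem hx, by rw [hβ, h]; ring⟩

private lemma equiv_int_map_eq {A : Type} [AddCommGroup A] (g : A ≃+ ℤ) (α : A ≃+ A)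
    (S : AddSubgroup A) : AddSubgroup.map α.toAddMonoidHom S = S := by
  set β : ℤ ≃+ ℤ := (g.symm.trans α).trans g with hβdef
  have key := int_equiv_map_eq β (S.map g.toAddMonoidHom)
  ext x
  constructor
  · rintro ⟨s, hs, rfl⟩
    have h1 : g (α s) ∈ AddSubgroup.map β.toAddMonoidHom (S.map g.toAddMonoidHom) := by
      refine ⟨g s, ⟨s, hs, rfl⟩, ?_⟩
      simp [hβdef]
    rw [key] at h1
    obtain ⟨t, ht, hts⟩ := h1
    have h2 : t = α s := g.injective hts
    show α s ∈ S
    rwa [h2] at ht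
  · intro hx
    refine ⟨α.symm x, ?_, by simp⟩
    have h1 : g x ∈ AddSubgroup.map β.toAddMonoidHom (S.map g.toAddMonoidHom) := by
      rw [key]; exact ⟨x, hx, rfl⟩
    obtain ⟨t, ⟨s, hs, rfl⟩, hts⟩ := h1
    have h2 : α s = x := g.injective (by simpa [hβdef] using hts)
    have h3 : α.symm x = s := by rw [← h2, α.symm_apply_apply]
    rwa [h3]

private lemma quot_iso {A B : Type} [AddCommGroup A] [AddCommGroup B] (f : A →+ B)
    (hf : Function.Injective f) (S₁ S₂ : AddSubgroup A) (T₁ T₂ : AddSubgroup B)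
    (hS : S₂ ≤ S₁) (h₁ : S₁.map f = T₁) (h₂ : S₂.map f = T₂) :
    Nonempty ((S₁ ⧸ S₂.addSubgroupOf S₁) ≃+ (T₁ ⧸ T₂.addSubgroupOf T₁)) := by
  let e₁ : S₁ ≃+ T₁ :=
    (AddSubgroup.equivMapOfInjective S₁ f hf).trans (AddEquiv.addSubgroupCongr h₁)
  have hval : ∀ x : S₁, (e₁ x : B) = f x := fun x => rfl
  have hmap : (S₂.addSubgroupOf S₁).map e₁.toAddMonoidHom = T₂.addSubgroupOf T₁ := by
    ext y
    simp only [AddSubgroup.mem_map, AddSubgroup.mem_addSubgroupOf,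
      AddEquiv.toAddMonoidHom_eq_coe, AddMonoidHom.coe_coe]
    constructor
    · rintro ⟨x, hx, rfl⟩
      show (e₁ x : B) ∈ T₂
      rw [hval, ← h₂]
      exact ⟨x, hx, rfl⟩
    · intro hy
      rw [← h₂] at hy
      obtain ⟨x, hx, hxy⟩ := hy
      refine ⟨⟨x, hS hx⟩, hx, ?_⟩
      apply Subtype.ext
      rw [hval]
      exact hxy
  exact ⟨QuotientAddGroup.congr _ _ e₁ hmap⟩

/-- Let `(C*, F)` and `(D*, G)` be filtered cochain complexes of abelian groups,
`φ : C* → D*` and `ψ : D* → C*` filtration-preserving chain maps inducing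
isomorphisms on cohomology, and suppose `H⁰(C) ≅ ℤ ≅ H⁰(D)` (here the relevant
degree is written `i+1`).  Then under the isomorphism induced by `φ` the
filtration submodules correspond: the image of `H⁰(C)_q` equals `H⁰(D)_q`, and
hence the associated graded groups `H⁰(C)^{(q)}` and `H⁰(D)^{(q)}` are
isomorphic for all `q`. -/
theorem stmt_14 (C D : ℤ → Type) [∀ i, AddCommGroup (C i)] [∀ i, AddCommGroup (D i)]
    (dC : ∀ i : ℤ, C i →+ C (i + 1)) (dD : ∀ i : ℤ, D i →+ D (i + 1))
    (hddC : ∀ (i : ℤ) (c : C i), dC (i + 1) (dC i c) = 0)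
    (hddD : ∀ (i : ℤ) (c : D i), dD (i + 1) (dD i c) = 0)
    (F : ℤ → ∀ i, AddSubgroup (C i)) (G : ℤ → ∀ i, AddSubgroup (D i))
    (hFdesc : ∀ q i, F (q + 2) i ≤ F q i) (hGdesc : ∀ q i, G (q + 2) i ≤ G q i)
    (hFsub : ∀ q i, ∀ c ∈ F q i, dC i c ∈ F q (i + 1))
    (hGsub : ∀ q i, ∀ c ∈ G q i, dD i c ∈ G q (i + 1))
    (φ : ∀ i : ℤ, C i →+ D i) (ψ : ∀ i : ℤ, D i →+ C i)
    (hφd : ∀ (i : ℤ) (c : C i), φ (i + 1) (dC i c) = dD i (φ i c))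
    (hψd : ∀ (i : ℤ) (c : D i), ψ (i + 1) (dD i c) = dC i (ψ i c))
    (hφF : ∀ q i, ∀ c ∈ F q i, φ i c ∈ G q i)
    (hψG : ∀ q i, ∀ c ∈ G q i, ψ i c ∈ F q i)
    (i : ℤ)
    -- φ and ψ induce isomorphisms on cohomology in degree i+1:
    (hφsurj : ∀ w : cocycles D dD i, ∃ z : cocycles C dC i,
      QuotientAddGroup.mk' (coboundaries D dD i)
        (mapOnCocycles C D dC dD φ hφd i z) =
      QuotientAddGroup.mk' (coboundaries D dD i) w)
    (hφinj : ∀ z : cocycles C dC i,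
      QuotientAddGroup.mk' (coboundaries D dD i)
        (mapOnCocycles C D dC dD φ hφd i z) = 0 →
      QuotientAddGroup.mk' (coboundaries C dC i) z = 0)
    (hψsurj : ∀ z : cocycles C dC i, ∃ w : cocycles D dD i,
      QuotientAddGroup.mk' (coboundaries C dC i)
        (mapOnCocycles D C dD dC ψ hψd i w) =
      QuotientAddGroup.mk' (coboundaries C dC i) z)
    (hψinj : ∀ w : cocycles D dD i,
      QuotientAddGroup.mk' (coboundaries C dC i)
        (mapOnCocycles D C dD dC ψ hψd i w) = 0 →
      QuotientAddGroup.mk' (coboundaries D dD i) w = 0)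
    -- H⁰(C) ≅ ℤ ≅ H⁰(D):
    (hHC : Nonempty (cohomology C dC i ≃+ ℤ))
    (hHD : Nonempty (cohomology D dD i ≃+ ℤ)) :
    ∀ q : ℤ,
      AddSubgroup.map (QuotientAddGroup.mk' (coboundaries D dD i))
        (AddSubgroup.map (mapOnCocycles C D dC dD φ hφd i)
          ((F q (i + 1)).addSubgroupOf (cocycles C dC i))) =
        inducedFiltration D dD G q i ∧
      Nonempty (gradedCohomology C dC F q i ≃+ gradedCohomology D dD G q i)  := by
  classical
  set f := mapOnCocycles C D dC dD φ hφd i with hfdef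
  set g := mapOnCocycles D C dD dC ψ hψd i with hgdef
  have hfval : ∀ z : cocycles C dC i, (f z : D (i+1)) = φ (i+1) (z : C (i+1)) := fun z => rfl
  have hgval : ∀ w : cocycles D dD i, (g w : C (i+1)) = ψ (i+1) (w : D (i+1)) := fun w => rfl
  have hfcob : coboundaries C dC i ≤ (coboundaries D dD i).comap f := by
    intro z hz
    rw [coboundaries, AddSubgroup.mem_addSubgroupOf] at hz
    rw [AddSubgroup.mem_comap, coboundaries, AddSubgroup.mem_addSubgroupOf]
    obtain ⟨c, hc⟩ := hz
    exact ⟨φ i c, by rw [hfval, ← hc, hφd]⟩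
  have hgcob : coboundaries D dD i ≤ (coboundaries C dC i).comap g := by
    intro w hw
    rw [coboundaries, AddSubgroup.mem_addSubgroupOf] at hw
    rw [AddSubgroup.mem_comap, coboundaries, AddSubgroup.mem_addSubgroupOf]
    obtain ⟨c, hc⟩ := hw
    exact ⟨ψ i c, by rw [hgval, ← hc, hψd]⟩
  set Φ : cohomology C dC i →+ cohomology D dD i :=
    QuotientAddGroup.map _ _ f hfcob with hΦdef
  set Ψ : cohomology D dD i →+ cohomology C dC i :=
    QuotientAddGroup.map _ _ g hgcob with hΨdef
  have hΦmk : ∀ z : cocycles C dC i,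
      Φ (QuotientAddGroup.mk' (coboundaries C dC i) z)
        = QuotientAddGroup.mk' (coboundaries D dD i) (f z) := fun z => rfl
  have hΨmk : ∀ w : cocycles D dD i,
      Ψ (QuotientAddGroup.mk' (coboundaries D dD i) w)
        = QuotientAddGroup.mk' (coboundaries C dC i) (g w) := fun w => rfl
  have hΦsurj : Function.Surjective Φ := by
    intro w
    induction w using QuotientAddGroup.induction_on with
    | H w =>
      obtain ⟨z, hz⟩ := hφsurj w
      exact ⟨QuotientAddGroup.mk' _ z, by rw [hΦmk, hz]; rfl⟩
  have hΨsurj : Function.Surjective Ψ := by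
    intro z
    induction z using QuotientAddGroup.induction_on with
    | H z =>
      obtain ⟨w, hw⟩ := hψsurj z
      exact ⟨QuotientAddGroup.mk' _ w, by rw [hΨmk, hw]; rfl⟩
  have hΦinj : Function.Injective Φ := by
    rw [injective_iff_map_eq_zero]
    intro x hx
    induction x using QuotientAddGroup.induction_on with
    | H z =>
      have h0 : QuotientAddGroup.mk' (coboundaries C dC i) z = 0 :=
        hφinj z (by rw [← hΦmk]; exact hx)
      exact h0
  have hΨinj : Function.Injective Ψ := by
    rw [injective_iff_map_eq_zero]
    intro x hx
    induction x using QuotientAddGroup.induction_on with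
    | H w =>
      have h0 : QuotientAddGroup.mk' (coboundaries D dD i) w = 0 :=
        hψinj w (by rw [← hΨmk]; exact hx)
      exact h0
  -- Φ maps the filtration into the filtration, and similarly for Ψ.
  have mapΦ_le : ∀ q, (inducedFiltration C dC F q i).map Φ ≤ inducedFiltration D dD G q i := by
    rintro q x ⟨y, hy, rfl⟩
    obtain ⟨z, hz, rfl⟩ := hy
    have hz' : (z : C (i+1)) ∈ F q (i+1) := hz
    refine ⟨f z, ?_, (hΦmk z).symm⟩
    exact hφF q (i+1) (z : C (i+1)) hz'
  have mapΨ_le : ∀ q, (inducedFiltration D dD G q i).map Ψ ≤ inducedFiltration C dC F q i := by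
    rintro q x ⟨y, hy, rfl⟩
    obtain ⟨w, hw, rfl⟩ := hy
    have hw' : (w : D (i+1)) ∈ G q (i+1) := hw
    refine ⟨g w, ?_, (hΨmk w).symm⟩
    exact hψG q (i+1) (w : D (i+1)) hw'
  -- The composite Ψ ∘ Φ is an automorphism of a group isomorphic to ℤ, hence fixes
  -- every subgroup.
  have hα : ∀ S : AddSubgroup (cohomology C dC i), S.map (Ψ.comp Φ) = S := by
    intro S
    have hbij : Function.Bijective (Ψ.comp Φ) := ⟨hΨinj.comp hΦinj, hΨsurj.comp hΦsurj⟩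
    set α := AddEquiv.ofBijective (Ψ.comp Φ) hbij with hαdef
    have hcoe : α.toAddMonoidHom = Ψ.comp Φ := by ext x; rfl
    rw [← hcoe]
    exact equiv_int_map_eq hHC.some α S
  have key : ∀ q, (inducedFiltration C dC F q i).map Φ = inducedFiltration D dD G q i := by
    intro q
    refine le_antisymm (mapΦ_le q) ?_
    have h1 : ((inducedFiltration C dC F q i).map Φ).map Ψ = inducedFiltration C dC F q i := by
      rw [AddSubgroup.map_map]
      exact hα _
    have h2 : (inducedFiltration D dD G q i).map Ψ
        ≤ ((inducedFiltration C dC F q i).map Φ).map Ψ := by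
      rw [h1]; exact mapΨ_le q
    intro x hx
    have h3 : Ψ x ∈ ((inducedFiltration C dC F q i).map Φ).map Ψ :=
      h2 ⟨x, hx, rfl⟩
    obtain ⟨y, hy, hyx⟩ := h3
    rwa [hΨinj hyx] at hy
  intro q
  have hcomp : Φ.comp (QuotientAddGroup.mk' (coboundaries C dC i))
      = (QuotientAddGroup.mk' (coboundaries D dD i)).comp f := by
    ext z; exact hΦmk z
  constructor
  · rw [AddSubgroup.map_map, ← hcomp, ← AddSubgroup.map_map]
    exact key q
  · have hle : inducedFiltration C dC F (q + 2) i ≤ inducedFiltration C dC F q i := by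
      rintro x ⟨z, hz, rfl⟩
      have hz' : (z : C (i+1)) ∈ F (q + 2) (i+1) := hz
      exact ⟨z, hFdesc q (i+1) hz', rfl⟩
    exact quot_iso Φ hΦinj _ _ _ _ hle (key q) (key (q + 2))
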